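/- Let n ≥ 2, let 0 = r_1 < r_2 < ⋯ < r_n = R be a mesh of nodes, set x_i = r_i, and define p_{ij} = √(r_{j+1}² − x_i²) − √(r_j² − x_i²) for 1 ≤ i ≤ j ≤ n−1. Let k : [0, R] → ℝ be continuously differentiable. Then for every i = 1, …, n−1 there exist points ξ_j ∈ [r_j, r_{j+1}] (j = i, …, n−1) such that ∫_{x_i}^R r·k(r)/√(r² − x_i²) dr = ∑_{j=i}^{n−1} p_{ij}·k(r_j) + ∑_{j=i}^{n−1} k′(ξ_j) · ∫_{r_j}^{r_{j+1}} r(r − r_j)/√(r² − x_i²) dr. -/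

import Mathlib

open MeasureTheory intervalIntegral Finset

/-- Integrability of `s ↦ s * g s / √(s² - a²)` on `[c,d]` when `0 ≤ a ≤ c ≤ d`. -/
lemma abel_integrable {a c d : ℝ} (ha : 0 ≤ a) (hac : a ≤ c) (hcd : c ≤ d)
    {g : ℝ → ℝ} (hg : ContinuousOn g (Set.Icc c d)) :
    IntervalIntegrable (fun s => s * g s / Real.sqrt (s ^ 2 - a ^ 2)) volume c d := by
  obtain ⟨M, hM⟩ := isCompact_Icc.exists_bound_of_continuousOn hg
  have hM0 : 0 ≤ M := le_trans (norm_nonneg _) (hM c ⟨le_refl c, hcd⟩)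
  -- the dominating function
  set bnd : ℝ → ℝ := fun s => M * Real.sqrt d * (s - a) ^ (-(1/2) : ℝ) with hbnd
  have hbint : IntervalIntegrable bnd volume c d := by
    have h1 : IntervalIntegrable (fun x : ℝ => x ^ (-(1/2) : ℝ)) volume 0 (d - a) :=
      intervalIntegrable_rpow' (by norm_num)
    have h2 := (h1.comp_sub_right a).const_mul (M * Real.sqrt d)
    simp only [zero_add] at h2
    rw [sub_add_cancel] at h2
    exact h2.mono_set (Set.uIcc_subset_uIcc_iff_le.mpr
      ⟨by rw [min_eq_left hcd, min_eq_left (hac.trans hcd)]; exact hac,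
       by rw [max_eq_right hcd, max_eq_right (hac.trans hcd)]⟩)
  rw [intervalIntegrable_iff_integrableOn_Ioc_of_le hcd]
  have hbint' : IntegrableOn bnd (Set.Ioc c d) volume := by
    rw [intervalIntegrable_iff_integrableOn_Ioc_of_le hcd] at hbint
    exact hbint
  apply hbint'.mono'
  · -- measurability
    apply ContinuousOn.aestronglyMeasurable _ measurableSet_Ioc
    apply ContinuousOn.div
    · exact (continuousOn_id.mul (hg.mono (Set.Ioc_subset_Icc_self)))
    · exact ((continuous_pow 2).sub continuous_const).continuousOn.sqrt
    · intro s hs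
      have hsa : a < s := lt_of_le_of_lt hac hs.1
      have : 0 < s ^ 2 - a ^ 2 := by nlinarith [hs.1, hs.2]
      positivity
  · -- a.e. bound
    filter_upwards [ae_restrict_mem measurableSet_Ioc] with s hs
    have hsa : a < s := lt_of_le_of_lt hac hs.1
    have hs0 : 0 < s := lt_of_le_of_lt (ha.trans hac) hs.1
    have key : Real.sqrt (s ^ 2 - a ^ 2) = Real.sqrt (s - a) * Real.sqrt (s + a) := by
      rw [← Real.sqrt_mul (by linarith)]
      ring_nf
    have hsqrtpos : 0 < Real.sqrt (s - a) := Real.sqrt_pos.mpr (by linarith)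
    have hspa : 0 < Real.sqrt (s + a) := Real.sqrt_pos.mpr (by linarith)
    have hfrac : s / Real.sqrt (s ^ 2 - a ^ 2) ≤ Real.sqrt d / Real.sqrt (s - a) := by
      rw [key]
      rw [div_le_div_iff₀ (by positivity) hsqrtpos]
      have h1 : s = Real.sqrt s * Real.sqrt s := (Real.mul_self_sqrt hs0.le).symm
      calc s * Real.sqrt (s - a) = Real.sqrt s * Real.sqrt s * Real.sqrt (s - a) := by rw [← h1]
        _ ≤ Real.sqrt d * Real.sqrt (s + a) * Real.sqrt (s - a) := by
            apply mul_le_mul_of_nonneg_right _ hsqrtpos.le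
            exact mul_le_mul (Real.sqrt_le_sqrt (hs.2)) (Real.sqrt_le_sqrt (by linarith)) (Real.sqrt_nonneg s) (Real.sqrt_nonneg d)
        _ = Real.sqrt d * (Real.sqrt (s - a) * Real.sqrt (s + a)) := by ring
    have hbs : bnd s = M * (Real.sqrt d / Real.sqrt (s - a)) := by
      rw [hbnd]
      simp only
      rw [Real.rpow_neg (by linarith), ← Real.sqrt_eq_rpow, div_eq_mul_inv]
      ring
    rw [Real.norm_eq_abs, abs_div, abs_mul, hbs, abs_of_pos hs0,
      abs_of_nonneg (Real.sqrt_nonneg _)]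
    rw [div_le_iff₀ (by rw [key]; positivity), mul_comm s |g s|]
    calc |g s| * s = |g s| * (s / Real.sqrt (s ^ 2 - a ^ 2) * Real.sqrt (s ^ 2 - a ^ 2)) := by
          rw [div_mul_cancel₀]
          rw [key]; positivity
      _ ≤ M * (Real.sqrt d / Real.sqrt (s - a)) * Real.sqrt (s ^ 2 - a ^ 2) := by
          rw [← mul_assoc]
          apply mul_le_mul_of_nonneg_right _ (Real.sqrt_nonneg _)
          have := hM s ⟨hs.1.le, hs.2⟩
          rw [Real.norm_eq_abs] at this
          apply mul_le_mul this hfrac (by positivity) hM0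

lemma abel_sqrt_integral {a c d : ℝ} (ha : 0 ≤ a) (hac : a ≤ c) (hcd : c ≤ d) :
    ∫ s in c..d, s / Real.sqrt (s ^ 2 - a ^ 2)
      = Real.sqrt (d ^ 2 - a ^ 2) - Real.sqrt (c ^ 2 - a ^ 2) := by
  have hint : IntervalIntegrable (fun s => s / Real.sqrt (s ^ 2 - a ^ 2)) volume c d := by
    have := abel_integrable ha hac hcd (g := fun _ => (1:ℝ)) continuousOn_const
    simpa using this
  apply integral_eq_sub_of_hasDerivAt_of_le hcd
  · exact (((continuous_pow 2).sub continuous_const).sqrt).continuousOn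
  · intro x hx
    have hxa : a < x := lt_of_le_of_lt hac hx.1
    have hx0 : 0 < x := lt_of_le_of_lt (ha.trans hac) hx.1
    have hpos : 0 < x ^ 2 - a ^ 2 := by nlinarith
    have h1 : HasDerivAt (fun s : ℝ => s ^ 2 - a ^ 2) (2 * x) x := by
      simpa using ((hasDerivAt_pow 2 x).sub_const (a ^ 2))
    have h2 := h1.sqrt hpos.ne'
    have hne : Real.sqrt (x ^ 2 - a ^ 2) ≠ 0 := (Real.sqrt_pos.mpr hpos).ne'
    rw [mul_div_mul_left _ _ (two_ne_zero' ℝ)] at h2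
    exact h2
  · exact hint

lemma abel_mvt {a c d : ℝ} {k k' : ℝ → ℝ} (ha : 0 ≤ a) (hac : a ≤ c) (hcd : c ≤ d)
    (hderiv : ∀ t ∈ Set.Icc c d, HasDerivAt k (k' t) t)
    (hcont : ContinuousOn k' (Set.Icc c d)) :
    ∃ ξ ∈ Set.Icc c d,
      ∫ s in c..d, s * (k s - k c) / Real.sqrt (s ^ 2 - a ^ 2)
        = k' ξ * ∫ s in c..d, s * (s - c) / Real.sqrt (s ^ 2 - a ^ 2) := by
  have hkcont : ContinuousOn k (Set.Icc c d) :=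
    fun t ht => (hderiv t ht).continuousAt.continuousWithinAt
  set w : ℝ → ℝ := fun s => s * (s - c) / Real.sqrt (s ^ 2 - a ^ 2) with hw
  set f : ℝ → ℝ := fun s => s * (k s - k c) / Real.sqrt (s ^ 2 - a ^ 2) with hf
  have hWint : IntervalIntegrable w volume c d :=
    abel_integrable ha hac hcd ((continuousOn_id.sub continuousOn_const))
  have hIint : IntervalIntegrable f volume c d :=
    abel_integrable ha hac hcd (hkcont.sub continuousOn_const)
  obtain ⟨u, hu, humin⟩ := isCompact_Icc.exists_isMinOn ⟨c, Set.left_mem_Icc.mpr hcd⟩ hcont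
  obtain ⟨v, hv, hvmax⟩ := isCompact_Icc.exists_isMaxOn ⟨c, Set.left_mem_Icc.mpr hcd⟩ hcont
  have hw_nonneg : ∀ s ∈ Set.Icc c d, 0 ≤ w s := by
    intro s hs
    have hs0 : 0 ≤ s := le_trans (ha.trans hac) hs.1
    have : 0 ≤ s - c := by linarith [hs.1]
    positivity
  have hpoint : ∀ s ∈ Set.Icc c d, k' u * w s ≤ f s ∧ f s ≤ k' v * w s := by
    intro s hs
    rcases eq_or_lt_of_le hs.1 with heq | hlt
    · simp [hf, hw, ← heq]
    · obtain ⟨e, he, hke⟩ := exists_hasDerivAt_eq_slope k k' hlt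
        (hkcont.mono (Set.Icc_subset_Icc le_rfl hs.2))
        (fun x hx => hderiv x ⟨hx.1.le, hx.2.le.trans hs.2⟩)
      have heI : e ∈ Set.Icc c d := ⟨he.1.le, he.2.le.trans hs.2⟩
      have hfs : f s = k' e * w s := by
        have h1 : k s - k c = k' e * (s - c) := by
          rw [hke, div_mul_cancel₀ _ (by linarith : s - c ≠ 0)]
        rw [hf, hw]
        simp only
        rw [h1]
        ring
      constructor
      · rw [hfs]
        exact mul_le_mul_of_nonneg_right (humin heI) (hw_nonneg s hs)
      · rw [hfs]
        exact mul_le_mul_of_nonneg_right (hvmax heI) (hw_nonneg s hs)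
  set W := ∫ s in c..d, w s with hW
  set I := ∫ s in c..d, f s with hI
  have hlow : k' u * W ≤ I := by
    rw [hW, ← intervalIntegral.integral_const_mul]
    exact intervalIntegral.integral_mono_on hcd (hWint.const_mul _) hIint
      (fun x hx => (hpoint x hx).1)
  have hhigh : I ≤ k' v * W := by
    rw [hW, ← intervalIntegral.integral_const_mul]
    exact intervalIntegral.integral_mono_on hcd hIint (hWint.const_mul _)
      (fun x hx => (hpoint x hx).2)
  have hW0 : 0 ≤ W := intervalIntegral.integral_nonneg hcd hw_nonneg
  rcases eq_or_lt_of_le hW0 with hWeq | hWpos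
  · refine ⟨c, Set.left_mem_Icc.mpr hcd, ?_⟩
    rw [← hWeq, mul_zero]
    rw [← hWeq] at hlow hhigh
    simp only [mul_zero] at hlow hhigh
    linarith
  · have hmem : I / W ∈ Set.uIcc (k' u) (k' v) := by
      rw [Set.mem_uIcc]
      left
      constructor
      · rw [le_div_iff₀ hWpos]; linarith
      · rw [div_le_iff₀ hWpos]; linarith
    have hsub : Set.uIcc u v ⊆ Set.Icc c d := Set.uIcc_subset_Icc hu hv
    obtain ⟨ξ, hξ, hkξ⟩ := intermediate_value_uIcc (hcont.mono hsub) hmem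
    exact ⟨ξ, hsub hξ, by rw [hkξ, div_mul_cancel₀ _ hWpos.ne']⟩

/-- Let `n ≥ 2`, `0 = r 1 < ⋯ < r n = R` a mesh (with `x i = r i`), and
`p i j = √(r (j+1)² − r i²) − √(r j² − r i²)`.  If `k` is continuously differentiable
on `[0, r n]` (with derivative `k'`), then for every `i = 1, …, n−1` there exist
`ξ j ∈ [r j, r (j+1)]` (`j = i, …, n−1`) such that
`∫_{r i}^{r n} s k(s)/√(s² − (r i)²) ds = ∑_{j=i}^{n−1} p i j · k (r j)
  + ∑_{j=i}^{n−1} k' (ξ j) · ∫_{r j}^{r (j+1)} s (s − r j)/√(s² − (r i)²) ds`. -/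
theorem abel_quadrature_error_decomposition
    (n : ℕ) (hn : 2 ≤ n) (r : ℕ → ℝ) (hr0 : r 1 = 0)
    (hmono : ∀ j, 1 ≤ j → j < n → r j < r (j + 1))
    (p : ℕ → ℕ → ℝ)
    (hp : ∀ i j, p i j =
      Real.sqrt ((r (j + 1)) ^ 2 - (r i) ^ 2) - Real.sqrt ((r j) ^ 2 - (r i) ^ 2))
    (k k' : ℝ → ℝ)
    (hderiv : ∀ t ∈ Set.Icc (0 : ℝ) (r n), HasDerivAt k (k' t) t)
    (hcont : ContinuousOn k' (Set.Icc (0 : ℝ) (r n))) :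
    ∀ i, 1 ≤ i → i < n →
      ∃ ξ : ℕ → ℝ,
        (∀ j, i ≤ j → j < n → ξ j ∈ Set.Icc (r j) (r (j + 1))) ∧
          ∫ s in (r i)..(r n), s * k s / Real.sqrt (s ^ 2 - (r i) ^ 2)
            = (∑ j ∈ Finset.Ico i n, p i j * k (r j))
              + ∑ j ∈ Finset.Ico i n,
                  k' (ξ j) *
                    ∫ s in (r j)..(r (j + 1)),
                      s * (s - r j) / Real.sqrt (s ^ 2 - (r i) ^ 2) := by
  -- monotonicity of the mesh
  have hle : ∀ s t : ℕ, 1 ≤ s → s ≤ t → t ≤ n → r s ≤ r t := by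
    intro s t hs hst htn
    induction t with
    | zero => omega
    | succ m ih =>
      rcases eq_or_lt_of_le hst with heq | hlt
      · rw [heq]
      · have hsm : s ≤ m := by omega
        have h1m : 1 ≤ m := le_trans hs hsm
        have hmn : m < n := by omega
        exact le_trans (ih hsm (by omega)) (hmono m h1m hmn).le
  intro i hi1 hin
  set a := r i with ha_def
  have ha0 : 0 ≤ a := hr0 ▸ hle 1 i le_rfl hi1 hin.le
  -- facts for each subinterval
  have hfacts : ∀ j, i ≤ j → j < n →
      a ≤ r j ∧ r j ≤ r (j + 1) ∧ Set.Icc (r j) (r (j + 1)) ⊆ Set.Icc (0:ℝ) (r n) := by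
    intro j hij hjn
    have h1j : 1 ≤ j := le_trans hi1 hij
    have hac : a ≤ r j := hle i j hi1 hij hjn.le
    have hcd : r j ≤ r (j + 1) := (hmono j h1j hjn).le
    refine ⟨hac, hcd, ?_⟩
    apply Set.Icc_subset_Icc
    · rw [← hr0]; exact hle 1 j le_rfl h1j hjn.le
    · exact hle (j + 1) n (by omega) hjn (le_refl n)
  have hkcont : ContinuousOn k (Set.Icc (0:ℝ) (r n)) :=
    fun t ht => (hderiv t ht).continuousAt.continuousWithinAt
  -- integrability of the main integrand on each subinterval
  have hintj : ∀ j, i ≤ j → j < n →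
      IntervalIntegrable (fun s => s * k s / Real.sqrt (s ^ 2 - a ^ 2)) volume
        (r j) (r (j + 1)) := by
    intro j hij hjn
    obtain ⟨hac, hcd, hsub⟩ := hfacts j hij hjn
    exact abel_integrable ha0 hac hcd (hkcont.mono hsub)
  -- decomposition on each subinterval, with mean value point
  have H : ∀ j, ∃ ξ, i ≤ j → j < n →
      ξ ∈ Set.Icc (r j) (r (j + 1)) ∧
      (∫ s in (r j)..(r (j + 1)), s * k s / Real.sqrt (s ^ 2 - a ^ 2))
        = p i j * k (r j)
          + k' ξ * ∫ s in (r j)..(r (j + 1)),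
              s * (s - r j) / Real.sqrt (s ^ 2 - a ^ 2) := by
    intro j
    by_cases hj : i ≤ j ∧ j < n
    · obtain ⟨hij, hjn⟩ := hj
      obtain ⟨hac, hcd, hsub⟩ := hfacts j hij hjn
      obtain ⟨ξ, hξmem, hξeq⟩ := abel_mvt (k := k) (k' := k') ha0 hac hcd
        (fun t ht => hderiv t (hsub ht)) (hcont.mono hsub)
      refine ⟨ξ, fun _ _ => ⟨hξmem, ?_⟩⟩
      have hsplit : (fun s => s * k s / Real.sqrt (s ^ 2 - a ^ 2))
          = fun s => s * k (r j) / Real.sqrt (s ^ 2 - a ^ 2)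
              + s * (k s - k (r j)) / Real.sqrt (s ^ 2 - a ^ 2) := by
        funext s; ring
      have hint1 : IntervalIntegrable
          (fun s => s * k (r j) / Real.sqrt (s ^ 2 - a ^ 2)) volume (r j) (r (j + 1)) :=
        abel_integrable ha0 hac hcd continuousOn_const
      have hint2 : IntervalIntegrable
          (fun s => s * (k s - k (r j)) / Real.sqrt (s ^ 2 - a ^ 2)) volume (r j) (r (j + 1)) :=
        abel_integrable ha0 hac hcd ((hkcont.mono hsub).sub continuousOn_const)
      rw [hsplit, intervalIntegral.integral_add hint1 hint2, hξeq]
      congr 1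
      have : (fun s => s * k (r j) / Real.sqrt (s ^ 2 - a ^ 2))
          = fun s => k (r j) * (s / Real.sqrt (s ^ 2 - a ^ 2)) := by
        funext s; ring
      rw [this, intervalIntegral.integral_const_mul, abel_sqrt_integral ha0 hac hcd,
        hp i j]
      ring
    · exact ⟨0, fun h1 h2 => absurd ⟨h1, h2⟩ hj⟩
  choose ξ hξ using H
  refine ⟨ξ, fun j hj1 hj2 => (hξ j hj1 hj2).1, ?_⟩
  -- split the big integral
  have h0 := intervalIntegral.sum_integral_adjacent_intervals (μ := volume)
    (f := fun s => s * k s / Real.sqrt (s ^ 2 - a ^ 2)) (a := fun t => r (i + t))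
    (n := n - i) (fun t ht => hintj (i + t) (by omega) (by omega))
  have he2 : i + (n - i) = n := by omega
  beta_reduce at h0
  rw [he2, Nat.add_zero, ← ha_def] at h0
  rw [← h0, ← Finset.sum_add_distrib, Finset.sum_Ico_eq_sum_range]
  apply Finset.sum_congr rfl
  intro t ht
  rw [Finset.mem_range] at ht
  exact (hξ (i + t) (by omega) (by omega)).2
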